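/- arXiv:2507.11098 — 4 statements merged into one kernel-verified Lean document; each statement's English description precedes it below -/
import Mathlib

section
/- Let U be a finite set partitioned as U = U_L ⊎ U_H (i.e., U_L ∩ U_H = ∅ and U_L ∪ U_H = U), and let A and B be finite families of subsets of U. Define S_A := { (a ∩ U_L) ∪ x : a ∈ A, x ⊆ U_H, x ∩ a = ∅ } and S_B := { y ∪ (b ∩ U_H) : b ∈ B, y ⊆ U_L, y ∩ b = ∅ }. Then S_A ∩ S_B ≠ ∅ if and only if there exist a ∈ A and b ∈ B with a ∩ b = ∅. -/
/-- **Correctness of the meet-in-the-middle algorithm for Orthogonal Vectors**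
(Lemma 2.2): with `U = U_L ⊎ U_H`, the families
`S_A = {(a ∩ U_L) ∪ x : a ∈ A, x ⊆ U_H, x ∩ a = ∅}` and
`S_B = {y ∪ (b ∩ U_H) : b ∈ B, y ⊆ U_L, y ∩ b = ∅}`
intersect iff there is an orthogonal pair `a ∈ A`, `b ∈ B`. -/
theorem meet_in_the_middle_correct {α : Type*} [DecidableEq α]
    (U UL UH : Finset α) (hdisj : Disjoint UL UH) (hunion : UL ∪ UH = U)
    (A B : Finset (Finset α))
    (hA : ∀ a ∈ A, a ⊆ U) (hB : ∀ b ∈ B, b ⊆ U) :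
    ((A.biUnion fun a =>
        (UH.powerset.filter fun x => x ∩ a = ∅).image fun x => (a ∩ UL) ∪ x) ∩
      (B.biUnion fun b =>
        (UL.powerset.filter fun y => y ∩ b = ∅).image fun y => y ∪ (b ∩ UH))).Nonempty ↔
      ∃ a ∈ A, ∃ b ∈ B, a ∩ b = ∅ := by
  constructor
  · rintro ⟨s, hs⟩
    simp only [Finset.mem_inter, Finset.mem_biUnion, Finset.mem_image,
      Finset.mem_filter, Finset.mem_powerset] at hs
    obtain ⟨⟨a, ha, x, ⟨hxU, hxa⟩, hsa⟩, ⟨b, hb, y, ⟨hyU, hyb⟩, hsb⟩⟩ := hs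
    refine ⟨a, ha, b, hb, ?_⟩
    ext t
    simp only [Finset.mem_inter, Finset.notMem_empty, iff_false, not_and]
    intro hta htb
    have htU : t ∈ UL ∪ UH := hunion ▸ hA a ha hta
    rcases Finset.mem_union.mp htU with htL | htH
    · have hts : t ∈ s := hsa ▸ Finset.mem_union_left _ (Finset.mem_inter.mpr ⟨hta, htL⟩)
      rw [← hsb] at hts
      rcases Finset.mem_union.mp hts with hty | htbh
      · exact Finset.notMem_empty t (hyb ▸ Finset.mem_inter.mpr ⟨hty, htb⟩)
      · exact Finset.disjoint_left.mp hdisj htL (Finset.mem_inter.mp htbh).2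
    · have hts : t ∈ s := hsb ▸ Finset.mem_union_right _ (Finset.mem_inter.mpr ⟨htb, htH⟩)
      rw [← hsa] at hts
      rcases Finset.mem_union.mp hts with htal | htx
      · exact Finset.disjoint_left.mp hdisj (Finset.mem_inter.mp htal).2 htH
      · exact Finset.notMem_empty t (hxa ▸ Finset.mem_inter.mpr ⟨htx, hta⟩)
  · rintro ⟨a, ha, b, hb, hab⟩
    refine ⟨(a ∩ UL) ∪ (b ∩ UH), ?_⟩
    simp only [Finset.mem_inter, Finset.mem_biUnion, Finset.mem_image,
      Finset.mem_filter, Finset.mem_powerset]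
    constructor
    · refine ⟨a, ha, b ∩ UH, ⟨Finset.inter_subset_right, ?_⟩, rfl⟩
      ext t; simp only [Finset.mem_inter, Finset.notMem_empty, iff_false, not_and]
      intro ⟨htb, _⟩ hta
      exact Finset.notMem_empty t (hab ▸ Finset.mem_inter.mpr ⟨hta, htb⟩)
    · refine ⟨b, hb, a ∩ UL, ⟨Finset.inter_subset_right, ?_⟩, rfl⟩
      ext t; simp only [Finset.mem_inter, Finset.notMem_empty, iff_false, not_and]
      intro ⟨hta, _⟩ htb
      exact Finset.notMem_empty t (hab ▸ Finset.mem_inter.mpr ⟨hta, htb⟩)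
end

section
/- For all real numbers α, β with 0 ≤ α ≤ β and α + β ≤ 1, it holds that (1−α) · h( (1−α−β) / (2(1−α)) ) − (1−α−β) ≤ log₂(5/4), where h is the binary entropy function (note that α ≤ 1/2, so 1−α > 0). -/
/-- Binary entropy in bits: `h(p) = −p·log₂ p − (1−p)·log₂(1−p)`. -/
noncomputable def binEnt (p : ℝ) : ℝ := Real.binEntropy p / Real.log 2

/-- Key pointwise bound: `binEntropy p − 2p·log 2 ≤ log(5/4)` (in nats). -/
lemma key_bound (p : ℝ) (hp0 : 0 < p) (hp1 : p < 1) :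
    Real.binEntropy p - 2 * p * Real.log 2 ≤ Real.log (5 / 4) := by
  have h1p : (0:ℝ) < 1 - p := by linarith
  have h1' : p * Real.log (1 / (5 * p)) ≤ 1 / 5 - p := by
    have h := Real.log_le_sub_one_of_pos (show (0:ℝ) < 1 / (5 * p) by positivity)
    have h' := mul_le_mul_of_nonneg_left h hp0.le
    have e : p * (1 / (5 * p) - 1) = 1 / 5 - p := by field_simp
    linarith [e ▸ h']
  have h2' : (1 - p) * Real.log (4 / (5 * (1 - p))) ≤ 4 / 5 - (1 - p) := by
    have h := Real.log_le_sub_one_of_pos (show (0:ℝ) < 4 / (5 * (1 - p)) by positivity)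
    have h' := mul_le_mul_of_nonneg_left h h1p.le
    have e : (1 - p) * (4 / (5 * (1 - p)) - 1) = 4 / 5 - (1 - p) := by field_simp
    linarith [e ▸ h']
  have l4 : Real.log 4 = 2 * Real.log 2 := by
    rw [show (4:ℝ) = 2 ^ 2 by norm_num, Real.log_pow]; push_cast; ring
  have e1 : Real.log p⁻¹ = Real.log (5 / 4) + Real.log (1 / (5 * p)) + 2 * Real.log 2 := by
    rw [Real.log_inv, Real.log_div (by norm_num) (by norm_num),
      Real.log_div one_ne_zero (by positivity),
      Real.log_mul (by norm_num) hp0.ne', Real.log_one]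
    linarith
  have e2 : Real.log (1 - p)⁻¹ = Real.log (5 / 4) + Real.log (4 / (5 * (1 - p))) := by
    rw [Real.log_inv, Real.log_div (by norm_num) (by norm_num),
      Real.log_div (by norm_num) (by positivity),
      Real.log_mul (by norm_num) h1p.ne']
    linarith
  rw [Real.binEntropy, e1, e2]
  nlinarith [h1', h2']

/-- **Final exponent bound in Theorem 1.2**: for `0 ≤ α ≤ β` with `α + β ≤ 1`,
`(1−α)·h((1−α−β)/(2(1−α))) − (1−α−β) ≤ log₂(5/4)`. -/
theorem exponent_bound (α β : ℝ) (h0 : 0 ≤ α) (hab : α ≤ β) (hsum : α + β ≤ 1) :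
    (1 - α) * binEnt ((1 - α - β) / (2 * (1 - α))) - (1 - α - β) ≤
      Real.logb 2 (5 / 4) := by
  set a : ℝ := 1 - α with ha_def
  set t : ℝ := 1 - α - β with ht_def
  have ha : (1:ℝ)/2 ≤ a := by simp only [ha_def]; linarith
  have ha0 : (0:ℝ) < a := by linarith
  have ha1 : a ≤ 1 := by simp only [ha_def]; linarith
  have ht0 : (0:ℝ) ≤ t := by simp only [ht_def]; linarith
  have hta : t ≤ a := by simp only [ht_def, ha_def]; linarith
  have hl2 : (0:ℝ) < Real.log 2 := Real.log_pos one_lt_two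
  have hL : (0:ℝ) ≤ Real.log (5 / 4) := Real.log_nonneg (by norm_num)
  set p : ℝ := t / (2 * a) with hp_def
  have hpt : t = 2 * a * p := by
    rw [hp_def]; field_simp
  have main : a * Real.binEntropy p - t * Real.log 2 ≤ Real.log (5 / 4) := by
    rcases eq_or_lt_of_le ht0 with h | h
    · have hp0 : p = 0 := by simp [hp_def, ← h]
      rw [hp0, Real.binEntropy_zero, ← h]
      simpa using hL
    · have hp0 : 0 < p := by positivity
      have hp1 : p < 1 := by
        rw [hp_def, div_lt_one (by positivity)]
        linarith
      have hk := key_bound p hp0 hp1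
      have h1 : a * (Real.binEntropy p - 2 * p * Real.log 2) ≤ a * Real.log (5 / 4) :=
        mul_le_mul_of_nonneg_left hk ha0.le
      have h2 : a * Real.log (5 / 4) ≤ Real.log (5 / 4) := by
        nlinarith
      rw [hpt]; nlinarith [h1, h2]
  have heq : a * binEnt p - t = (a * Real.binEntropy p - t * Real.log 2) / Real.log 2 := by
    rw [binEnt]; field_simp
  rw [heq, Real.logb]
  exact (div_le_div_iff_of_pos_right hl2).mpr main
end

section
/- For every real β with 0 ≤ β ≤ 1, it holds that h((1+β)/2) + β − 1 ≤ log₂(5/4), where h is the binary entropy function. -/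
theorem binEntropy_gibbs (p : ℝ) (hp0 : 0 < p) (hp1 : p < 1) :
    Real.binEntropy p ≤ Real.log 5 - p * Real.log 4 := by
  have h1p : 0 < 1 - p := by linarith
  have l1 : Real.log (4 / (5 * p)) ≤ 4 / (5 * p) - 1 :=
    Real.log_le_sub_one_of_pos (by positivity)
  have l2 : Real.log (1 / (5 * (1 - p))) ≤ 1 / (5 * (1 - p)) - 1 :=
    Real.log_le_sub_one_of_pos (by positivity)
  have e1 : Real.log (4 / (5 * p)) = Real.log 4 - (Real.log 5 + Real.log p) := by
    rw [Real.log_div (by norm_num) (by positivity), Real.log_mul (by norm_num) hp0.ne']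
  have e2 : Real.log (1 / (5 * (1 - p))) = Real.log 1 - (Real.log 5 + Real.log (1 - p)) := by
    rw [Real.log_div (by norm_num) (by positivity), Real.log_mul (by norm_num) h1p.ne']
  rw [e1] at l1
  rw [e2, Real.log_one] at l2
  have m1 : p * (Real.log 4 - (Real.log 5 + Real.log p)) ≤ p * (4 / (5 * p) - 1) :=
    mul_le_mul_of_nonneg_left l1 hp0.le
  have m2 : (1 - p) * (0 - (Real.log 5 + Real.log (1 - p))) ≤
      (1 - p) * (1 / (5 * (1 - p)) - 1) :=
    mul_le_mul_of_nonneg_left l2 h1p.le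
  have r1 : p * (4 / (5 * p) - 1) = 4 / 5 - p := by field_simp
  have r2 : (1 - p) * (1 / (5 * (1 - p)) - 1) = 1 / 5 - (1 - p) := by field_simp
  rw [Real.binEntropy, Real.log_inv, Real.log_inv]
  rw [r1] at m1; rw [r2] at m2
  nlinarith [m1, m2]

/-- **The key inequality of Theorem 1.2 (case α = 0)**: for `0 ≤ β ≤ 1`,
`h((1+β)/2) + β − 1 ≤ log₂(5/4)`. -/
theorem entropy_exponent_bound (β : ℝ) (h0 : 0 ≤ β) (h1 : β ≤ 1) :
    binEnt ((1 + β) / 2) + β - 1 ≤ Real.logb 2 (5 / 4) := by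
  have hlog2 : (0:ℝ) < Real.log 2 := Real.log_pos (by norm_num)
  have hlogb : Real.logb 2 (5 / 4) = (Real.log 5 - Real.log 4) / Real.log 2 := by
    rw [Real.logb, Real.log_div (by norm_num) (by norm_num)]
  rcases eq_or_lt_of_le h1 with rfl | h1'
  · have : binEnt ((1 + 1) / 2) = 0 := by
      norm_num [binEnt, Real.binEntropy_one]
    rw [this, hlogb]
    have h45 : Real.log 4 < Real.log 5 := Real.log_lt_log (by norm_num) (by norm_num)
    have := div_nonneg (by linarith : (0:ℝ) ≤ Real.log 5 - Real.log 4) hlog2.le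
    linarith
  · set p : ℝ := (1 + β) / 2 with hpdef
    have hp0 : 0 < p := by rw [hpdef]; linarith
    have hp1 : p < 1 := by rw [hpdef]; linarith
    have key := binEntropy_gibbs p hp0 hp1
    have h4 : Real.log 4 = 2 * Real.log 2 := by
      rw [show (4:ℝ) = 2^2 by norm_num, Real.log_pow]; push_cast; ring
    rw [binEnt, hlogb, div_add' _ _ _ hlog2.ne', div_sub' hlog2.ne',
      div_le_div_iff₀ hlog2 hlog2]
    have : p * Real.log 4 = (1 + β) * Real.log 2 := by rw [h4, hpdef]; ring
    nlinarith [key, hlog2]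
end

section
/- Let ℓ ≥ 1 and m ≥ 0 be natural numbers, let u be a finite set with |u| = ℓ·m, let a ⊆ u, and let k_1, …, k_ℓ be natural numbers with k_1 + ⋯ + k_ℓ = |a| and k_i ≤ m for every i. Then the number of tuples (u_1, …, u_ℓ) of pairwise disjoint subsets of u with u_1 ∪ ⋯ ∪ u_ℓ = u, |u_i| = m for every i, and |u_i ∩ a| = k_i for every i equals multinomial(k_1,…,k_ℓ) · multinomial(m−k_1, …, m−k_ℓ), where multinomial(n_1,…,n_ℓ) := (n_1+⋯+n_ℓ)! / (n_1! ⋯ n_ℓ!). -/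
open Finset

lemma multinomial_map' {β α : Type*} (s : Finset β) (e : β ↪ α) (f : α → ℕ) :
    Nat.multinomial (s.map e) f = Nat.multinomial s (f ∘ e) := by
  simp [Nat.multinomial, Finset.sum_map, Finset.prod_map, Function.comp]

lemma multinomial_fin_succ {ℓ : ℕ} (n : Fin (ℓ + 1) → ℕ) :
    Nat.multinomial Finset.univ n
      = (∑ i, n i).choose (n 0) * Nat.multinomial Finset.univ (n ∘ Fin.succ) := by
  conv_lhs => rw [Fin.univ_succ, Nat.multinomial_cons, multinomial_map', Finset.sum_map]
  rw [Fin.sum_univ_succ]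
  rfl

lemma sup_univ_fin_succ {β : Type*} [SemilatticeSup β] [OrderBot β] {ℓ : ℕ}
    (f : Fin (ℓ + 1) → β) :
    Finset.univ.sup f = f 0 ⊔ Finset.univ.sup (fun i : Fin ℓ => f i.succ) := by
  rw [Fin.univ_succ, Finset.sup_cons, Finset.sup_map]
  rfl

lemma count_parts {α : Type*} [DecidableEq α] (ℓ : ℕ) :
    ∀ (s : Finset α) (n : Fin ℓ → ℕ), ∑ i, n i = s.card →
    ((Fintype.piFinset fun _ : Fin ℓ => s.powerset).filter fun f =>
        (∀ i j, i ≠ j → f i ∩ f j = ∅) ∧ Finset.univ.sup f = s ∧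
        (∀ i, (f i).card = n i)).card = Nat.multinomial Finset.univ n := by
  induction ℓ with
  | zero =>
    intro s n hsum
    have hs : s = ∅ := Finset.card_eq_zero.mp (by simpa using hsum.symm)
    subst hs
    rw [Finset.filter_true_of_mem]
    · simp
    · intro f _
      exact ⟨fun i => i.elim0, by simp, fun i => i.elim0⟩
  | succ ℓ ih =>
    intro s n hsum
    have hmem : ∀ f ∈ ((Fintype.piFinset fun _ : Fin (ℓ+1) => s.powerset).filter fun f =>
        (∀ i j, i ≠ j → f i ∩ f j = ∅) ∧ Finset.univ.sup f = s ∧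
        (∀ i, (f i).card = n i)), f 0 ∈ s.powersetCard (n 0) := by
      intro f hf
      simp only [Finset.mem_filter, Fintype.mem_piFinset, Finset.mem_powerset] at hf
      exact Finset.mem_powersetCard.mpr ⟨hf.1 0, hf.2.2.2 0⟩
    rw [Finset.card_eq_sum_card_fiberwise hmem]
    have key : ∀ t ∈ s.powersetCard (n 0),
        (((Fintype.piFinset fun _ : Fin (ℓ+1) => s.powerset).filter fun f =>
          (∀ i j, i ≠ j → f i ∩ f j = ∅) ∧ Finset.univ.sup f = s ∧
          (∀ i, (f i).card = n i)).filter fun f => f 0 = t).card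
        = Nat.multinomial Finset.univ (n ∘ Fin.succ) := by
      intro t ht
      rw [Finset.mem_powersetCard] at ht
      obtain ⟨hts, htc⟩ := ht
      have hcs : ∑ i, (n ∘ Fin.succ) i = (s \ t).card := by
        rw [Finset.card_sdiff_of_subset hts, htc, ← hsum, Fin.sum_univ_succ]
        simp [Function.comp]
      rw [← ih (s \ t) (n ∘ Fin.succ) hcs]
      refine Finset.card_nbij' (fun f : Fin (ℓ+1) → Finset α => fun j => f j.succ)
        (fun g : Fin ℓ → Finset α => Fin.cases t g) ?_ ?_ ?_ ?_
      · intro f hf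
        simp only [Finset.mem_coe, Finset.mem_filter, Fintype.mem_piFinset, Finset.mem_powerset] at hf
        obtain ⟨⟨hsub, hdisj, hsup, hcard⟩, h0⟩ := hf
        simp only [Finset.mem_coe, Finset.mem_filter, Fintype.mem_piFinset, Finset.mem_powerset]
        have hdisjt : ∀ j : Fin ℓ, Disjoint (f j.succ) t := by
          intro j
          rw [Finset.disjoint_iff_inter_eq_empty, ← h0]
          exact hdisj _ _ (Fin.succ_ne_zero j)
        refine ⟨fun j => Finset.subset_sdiff.mpr ⟨hsub _, hdisjt j⟩,
          fun i j hij => hdisj _ _ (fun h => hij (Fin.succ_injective _ h)), ?_,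
          fun i => hcard _⟩
        · -- sup of tail = s \ t
          have hsup' : t ∪ Finset.univ.sup (fun j : Fin ℓ => f j.succ) = s := by
            rw [← hsup, sup_univ_fin_succ f, h0, Finset.sup_eq_union]
          have hd : Disjoint t (Finset.univ.sup (fun j : Fin ℓ => f j.succ)) := by
            rw [Finset.disjoint_sup_right]
            exact fun j _ => (hdisjt j).symm
          rw [← hsup', Finset.union_sdiff_cancel_left hd]
      · intro g hg
        simp only [Finset.mem_coe, Finset.mem_filter, Fintype.mem_piFinset, Finset.mem_powerset] at hg
        obtain ⟨hsub, hdisj, hsup, hcard⟩ := hg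
        have hsub' : ∀ j, g j ⊆ s ∧ Disjoint (g j) t := by
          intro j; exact Finset.subset_sdiff.mp (hsub j)
        simp only [Finset.mem_coe, Finset.mem_filter, Fintype.mem_piFinset, Finset.mem_powerset]
        refine ⟨⟨?_, ?_, ?_, ?_⟩, rfl⟩
        · intro i
          induction i using Fin.cases with
          | zero => simpa using hts
          | succ j => simpa using (hsub' j).1
        · intro i j hij
          induction i using Fin.cases with
          | zero =>
            induction j using Fin.cases with
            | zero => exact absurd rfl hij
            | succ j' =>
              simpa [Finset.inter_comm, ← Finset.disjoint_iff_inter_eq_empty] using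
                ((hsub' j').2).symm
          | succ i' =>
            induction j using Fin.cases with
            | zero =>
              simpa [← Finset.disjoint_iff_inter_eq_empty] using (hsub' i').2
            | succ j' =>
              simpa using hdisj i' j' (fun h => hij (by rw [h]))
        · rw [sup_univ_fin_succ]
          simp only [Fin.cases_zero, Fin.cases_succ, hsup]
          rw [Finset.sup_eq_union, Finset.union_sdiff_of_subset hts]
        · intro i
          induction i using Fin.cases with
          | zero => simpa using htc
          | succ j => simpa using hcard j
      · intro f hf
        simp only [Finset.mem_coe, Finset.mem_filter] at hf
        funext i
        induction i using Fin.cases with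
        | zero => simp [hf.2]
        | succ j => simp
      · intro g _
        funext j
        simp
    rw [Finset.sum_congr rfl key, Finset.sum_const, Finset.card_powersetCard, ← hsum,
      multinomial_fin_succ, smul_eq_mul]

/-- **Counting ordered equal-size partitions splitting a set prescribedly**
(core of Observation 3.1): with `|u| = ℓ·m`, `a ⊆ u`, and `k_1 + ⋯ + k_ℓ = |a|`,
`k_i ≤ m`, the number of ordered partitions `(u_1,…,u_ℓ)` of `u` into parts of
size `m` with `|u_i ∩ a| = k_i` equals
`multinomial(k_1,…,k_ℓ) · multinomial(m−k_1,…,m−k_ℓ)`. -/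
theorem count_balanced_partitions {α : Type*} [DecidableEq α]
    (ℓ m : ℕ) (hℓ : 1 ≤ ℓ) (u a : Finset α) (hu : u.card = ℓ * m) (ha : a ⊆ u)
    (k : Fin ℓ → ℕ) (hsum : ∑ i, k i = a.card) (hk : ∀ i, k i ≤ m) :
    ((Fintype.piFinset fun _ : Fin ℓ => u.powerset).filter fun f =>
        (∀ i j, i ≠ j → f i ∩ f j = ∅) ∧ Finset.univ.sup f = u ∧
        (∀ i, (f i).card = m) ∧ (∀ i, (f i ∩ a).card = k i)).card =
      Nat.multinomial Finset.univ k * Nat.multinomial Finset.univ (fun i => m - k i) := by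
  have hsum2 : ∑ i, (m - k i) = (u \ a).card := by
    have h1 : ∑ i : Fin ℓ, ((m - k i) + k i) = ℓ * m := by
      have : ∀ i : Fin ℓ, (m - k i) + k i = m := fun i => Nat.sub_add_cancel (hk i)
      simp [this, Finset.sum_const, mul_comm]
    rw [Finset.sum_add_distrib, hsum] at h1
    have h2 : a.card ≤ ℓ * m := hu ▸ Finset.card_le_card ha
    rw [Finset.card_sdiff_of_subset ha, hu]
    omega
  rw [← count_parts ℓ a k hsum, ← count_parts ℓ (u \ a) (fun i => m - k i) hsum2,
    ← Finset.card_product]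
  refine Finset.card_nbij' (fun f : Fin ℓ → Finset α => (fun i => f i ∩ a, fun i => f i \ a))
    (fun p : (Fin ℓ → Finset α) × (Fin ℓ → Finset α) => fun i => p.1 i ∪ p.2 i) ?_ ?_ ?_ ?_
  · intro f hf
    simp only [Finset.mem_coe, Finset.mem_filter, Fintype.mem_piFinset, Finset.mem_powerset] at hf
    obtain ⟨hsub, hdisj, hsup, hcard, hcard2⟩ := hf
    simp only [Finset.mem_coe, Finset.mem_product, Finset.mem_filter, Fintype.mem_piFinset,
      Finset.mem_powerset]
    refine ⟨⟨fun i => Finset.inter_subset_right, ?_, ?_, hcard2⟩,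
      ⟨fun i => Finset.sdiff_subset_sdiff (hsub i) le_rfl, ?_, ?_, ?_⟩⟩
    · intro i j hij
      refine Finset.subset_empty.mp ?_
      rw [← hdisj i j hij]
      exact Finset.inter_subset_inter Finset.inter_subset_left Finset.inter_subset_left
    · have : (Finset.univ.sup fun i => f i ∩ a) = Finset.univ.sup f ∩ a := by
        simpa using (Finset.sup_inf_distrib_right Finset.univ f a).symm
      rw [this, hsup]
      exact Finset.inter_eq_right.mpr ha
    · intro i j hij
      refine Finset.subset_empty.mp ?_
      rw [← hdisj i j hij]
      exact Finset.inter_subset_inter Finset.sdiff_subset Finset.sdiff_subset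
    · rw [Finset.sup_sdiff_right, hsup]
    · intro i
      have := Finset.card_inter_add_card_sdiff (f i) a
      rw [hcard i, hcard2 i] at this
      omega
  · intro p hp
    simp only [Finset.mem_coe, Finset.mem_product, Finset.mem_filter, Fintype.mem_piFinset,
      Finset.mem_powerset] at hp
    obtain ⟨⟨gsub, gdisj, gsup, gcard⟩, hsub, hdisj, hsup, hcard⟩ := hp
    have hgh : ∀ i j : Fin ℓ, Disjoint (p.1 i) (p.2 j) := by
      intro i j
      exact Finset.disjoint_of_subset_left (gsub i)
        (Finset.disjoint_of_subset_right (hsub j) Finset.disjoint_sdiff)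
    simp only [Finset.mem_coe, Finset.mem_filter, Fintype.mem_piFinset, Finset.mem_powerset]
    have hinter : ∀ i, (p.1 i ∪ p.2 i) ∩ a = p.1 i := by
      intro i
      rw [Finset.union_inter_distrib_right, Finset.inter_eq_left.mpr (gsub i),
        Finset.inter_comm,
        Finset.disjoint_iff_inter_eq_empty.mp
          (Finset.disjoint_of_subset_right (hsub i) Finset.disjoint_sdiff),
        Finset.union_empty]
    refine ⟨fun i => Finset.union_subset ((gsub i).trans ha)
      ((hsub i).trans Finset.sdiff_subset), ?_, ?_, ?_, ?_⟩
    · intro i j hij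
      rw [← Finset.disjoint_iff_inter_eq_empty]
      rw [Finset.disjoint_union_left, Finset.disjoint_union_right,
        Finset.disjoint_union_right]
      exact ⟨⟨Finset.disjoint_iff_inter_eq_empty.mpr (gdisj i j hij), hgh i j⟩,
        ⟨(hgh j i).symm, Finset.disjoint_iff_inter_eq_empty.mpr (hdisj i j hij)⟩⟩
    · have : Finset.univ.sup (fun i => p.1 i ∪ p.2 i)
          = Finset.univ.sup p.1 ∪ Finset.univ.sup p.2 := Finset.sup_sup
      rw [this, gsup, hsup]
      exact Finset.union_sdiff_of_subset ha
    · intro i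
      rw [Finset.card_union_of_disjoint (hgh i i), gcard i, hcard i]
      exact Nat.add_sub_cancel' (hk i)
    · intro i
      rw [hinter i]
      exact gcard i
  · intro f _
    funext i
    exact sup_inf_sdiff (f i) a
  · intro p hp
    simp only [Finset.mem_coe, Finset.mem_product, Finset.mem_filter, Fintype.mem_piFinset,
      Finset.mem_powerset] at hp
    obtain ⟨⟨gsub, _, _, _⟩, hsub, _, _, _⟩ := hp
    have h1 : ∀ i, (p.1 i ∪ p.2 i) ∩ a = p.1 i := by
      intro i
      rw [Finset.union_inter_distrib_right, Finset.inter_eq_left.mpr (gsub i),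
        Finset.inter_comm,
        Finset.disjoint_iff_inter_eq_empty.mp
          (Finset.disjoint_of_subset_right (hsub i) Finset.disjoint_sdiff),
        Finset.union_empty]
    have h2 : ∀ i, (p.1 i ∪ p.2 i) \ a = p.2 i := by
      intro i
      rw [Finset.union_sdiff_distrib,
        Finset.sdiff_eq_empty_iff_subset.mpr (gsub i),
        Finset.sdiff_eq_self_of_disjoint
          (Finset.disjoint_of_subset_left (hsub i) Finset.sdiff_disjoint),
        Finset.empty_union]
    ext : 1 <;> funext i
    · exact h1 i
    · exact h2 i
end
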